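/- Let d ≥ 5, let u be a vertex of the hypercube Q_d, and let M be a matching of Q_d. Assume Conjecture B holds for dimension d. Then there are at most two neighbors w of u in Q_d for which there does not exist a Hamilton path of Q_d between u and w extending M. -/

import Mathlib

open SimpleGraph

/-- The hypercube graph `Q_n` on binary strings of length `n`:
two strings are adjacent iff they differ in exactly one coordinate. -/
def Qc (n : ℕ) : SimpleGraph (Fin n → Bool) where
  Adj u v := (Finset.univ.filter fun i => u i ≠ v i).card = 1
  symm := by
    constructor
    intro u v h
    have hset : (Finset.univ.filter fun i => v i ≠ u i)
        = (Finset.univ.filter fun i => u i ≠ v i) :=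
      Finset.filter_congr (fun i _ => by simp [ne_comm])
    rw [hset]; exact h
  loopless := by
    constructor
    intro u h
    simp at h

/-- The parity (weight mod 2) of a vertex of the hypercube. -/
def wt {n : ℕ} (u : Fin n → Bool) : ZMod 2 :=
  ((Finset.univ.filter fun i => u i = true).card : ZMod 2)

/-- The neighbor of `u` obtained by flipping coordinate `i`. -/
def flipCoord {n : ℕ} (u : Fin n → Bool) (i : Fin n) : Fin n → Bool :=
  Function.update u i (!u i)

/-- `M` is a matching of the graph `G`: a set of pairwise non-incident edges of `G`. -/
def IsMatchingOn {V : Type*} (G : SimpleGraph V) (M : Set (Sym2 V)) : Prop :=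
  M ⊆ G.edgeSet ∧ ∀ e ∈ M, ∀ f ∈ M, e ≠ f → ∀ v : V, v ∈ e → v ∉ f

/-- A vertex is covered by a set of edges if it is an endpoint of one of them. -/
def coveredBy {V : Type*} (M : Set (Sym2 V)) (v : V) : Prop :=
  ∃ e ∈ M, v ∈ e

/-- There is a Hamilton path of `G` between `u` and `v` whose edge set contains `M`. -/
def ExtendsHamPath {V : Type*} [DecidableEq V] (G : SimpleGraph V) (M : Set (Sym2 V)) (u v : V) : Prop :=
  ∃ p : G.Walk u v, p.IsHamiltonian ∧ ∀ e ∈ M, e ∈ p.edges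

/-- There is a Hamilton cycle of `G` whose edge set contains `M`. -/
def ExtendsHamCycle {V : Type*} [DecidableEq V] (G : SimpleGraph V) (M : Set (Sym2 V)) : Prop :=
  ∃ (a : V) (c : G.Walk a a), c.IsHamiltonianCycle ∧ ∀ e ∈ M, e ∈ c.edges

/-- The set of directions (coordinates where the endpoints differ) of an edge. -/
def edgeDirs {n : ℕ} (e : Sym2 (Fin n → Bool)) : Finset (Fin n) :=
  Sym2.lift ⟨fun u v => Finset.univ.filter fun i => u i ≠ v i, fun u v =>
    Finset.filter_congr (fun i _ => by simp [ne_comm])⟩ e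

/-- The edges of `M` lie in at most `d` distinct directions. -/
def SpansAtMost {n : ℕ} (M : Set (Sym2 (Fin n → Bool))) (d : ℕ) : Prop :=
  ∃ D : Finset (Fin n), D.card ≤ d ∧ ∀ e ∈ M, edgeDirs e ⊆ D

/-- The half-layer in direction `i` of parity `p`: all edges of `Q_n` in direction `i`
whose base (the endpoint with `i`-th coordinate `false`) has parity `p`. -/
def halfLayer (n : ℕ) (i : Fin n) (p : ZMod 2) : Set (Sym2 (Fin n → Bool)) :=
  {e | ∃ u : Fin n → Bool, u i = false ∧ wt u = p ∧ e = s(u, flipCoord u i)}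

/-- Condition C1: `M` contains a half-layer covering both `u` and `v`. -/
def CondC1 {n : ℕ} (M : Set (Sym2 (Fin n → Bool))) (u v : Fin n → Bool) : Prop :=
  ∃ (i : Fin n) (p : ZMod 2), halfLayer n i p ⊆ M ∧
    coveredBy (halfLayer n i p) u ∧ coveredBy (halfLayer n i p) v

/-- Condition C2: `v = u^i`, `M` contains a `u`-avoiding almost half-layer in direction `i`,
and there is `j ≠ i` with `u u^j ∈ M` and `v v^j ∈ M`. -/
def CondC2 {n : ℕ} (M : Set (Sym2 (Fin n → Bool))) (u v : Fin n → Bool) : Prop :=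
  ∃ i : Fin n, v = flipCoord u i ∧
    (∃ (p : ZMod 2) (e₀ : Sym2 (Fin n → Bool)), e₀ ∈ halfLayer n i p ∧ u ∈ e₀ ∧
      halfLayer n i p \ {e₀} ⊆ M) ∧
    ∃ j : Fin n, j ≠ i ∧ s(u, flipCoord u j) ∈ M ∧ s(v, flipCoord v j) ∈ M

/-- Condition C3: `uv ∈ M`. -/
def CondC3 {n : ℕ} (M : Set (Sym2 (Fin n → Bool))) (u v : Fin n → Bool) : Prop :=
  s(u, v) ∈ M

/-- None of the C-conditions holds for `M`, `u`, `v`. -/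
def NoneC {n : ℕ} (M : Set (Sym2 (Fin n → Bool))) (u v : Fin n → Bool) : Prop :=
  ¬ CondC1 M u v ∧ ¬ CondC2 M u v ∧ ¬ CondC3 M u v

/-- Conjecture A for dimension `d`: for every matching `M` of `Q_d` and vertices `u`, `v`
of opposite parity with `u` not covered by `M`, there is a Hamilton path between `u` and `v`
extending `M`. -/
def ConjA (d : ℕ) : Prop :=
  ∀ M : Set (Sym2 (Fin d → Bool)), IsMatchingOn (Qc d) M →
    ∀ u v : Fin d → Bool, wt u ≠ wt v → ¬ coveredBy M u →
      ExtendsHamPath (Qc d) M u v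

/-- Conjecture B for dimension `d`: for every matching `M` of `Q_d` and vertices `u`, `v`
of opposite parity, a Hamilton path between `u` and `v` extending `M` exists iff none of
the C-conditions holds. -/
def ConjB (d : ℕ) : Prop :=
  ∀ M : Set (Sym2 (Fin d → Bool)), IsMatchingOn (Qc d) M →
    ∀ u v : Fin d → Bool, wt u ≠ wt v →
      (ExtendsHamPath (Qc d) M u v ↔ NoneC M u v)

/-- There exist at least two distinct Hamilton paths of `G` between `u` and `v`
extending `M`. -/
def TwoHamPaths {V : Type*} [DecidableEq V] (G : SimpleGraph V) (M : Set (Sym2 V)) (u v : V) : Prop :=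
  ∃ p₁ p₂ : G.Walk u v, p₁.IsHamiltonian ∧ (∀ e ∈ M, e ∈ p₁.edges) ∧
    p₂.IsHamiltonian ∧ (∀ e ∈ M, e ∈ p₂.edges) ∧ p₁ ≠ p₂

/-- Conjecture C for dimension `d`: none of the C-conditions holds iff there exist two
distinct Hamilton paths between `u` and `v` extending `M`. -/
def ConjC (d : ℕ) : Prop :=
  ∀ M : Set (Sym2 (Fin d → Bool)), IsMatchingOn (Qc d) M →
    ∀ u v : Fin d → Bool, wt u ≠ wt v →
      (NoneC M u v ↔ TwoHamPaths (Qc d) M u v)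

/-- The copy of a set of edges of `Q_d` inside the `i`-th canonical copy of `Q_d`
in `P_m □ Q_d`. -/
def liftEdges {m d : ℕ} (i : Fin m) (M : Set (Sym2 (Fin d → Bool))) :
    Set (Sym2 (Fin m × (Fin d → Bool))) :=
  (Sym2.map fun x => (i, x)) '' M

/-- The global parity of a vertex of `P_m □ Q_d`. -/
def gwt {m d : ℕ} (v : Fin m × (Fin d → Bool)) : ZMod 2 :=
  (v.1.val : ZMod 2) + wt v.2

/-- The sequence of half-layers of `P_m □ Q_d` in direction `k` of global parity `p`:
all edges of the canonical copies lying in direction `k` whose base has global parity `p`. -/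
def seqHalfLayer (m d : ℕ) (k : Fin d) (p : ZMod 2) :
    Set (Sym2 (Fin m × (Fin d → Bool))) :=
  {e | ∃ (i : Fin m) (x : Fin d → Bool), x k = false ∧ gwt (i, x) = p ∧
    e = s((i, x), (i, flipCoord x k))}

/-- `M` is a maximal matching of `G`. -/
def IsMaximalMatchingOn {V : Type*} (G : SimpleGraph V) (M : Set (Sym2 V)) : Prop :=
  IsMatchingOn G M ∧ ∀ e : Sym2 V, IsMatchingOn G (insert e M) → e ∈ M

/-- The set `(M \ {uu^M, vv^M}) ∪ {u^M v^M}`, where the removed edges are those of `M`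
incident to `u` or `v`, and the edge `u^M v^M` is present exactly when both `u` and `v`
are covered by `M`. -/
def reducedM {n : ℕ} (M : Set (Sym2 (Fin n → Bool))) (u v : Fin n → Bool) :
    Set (Sym2 (Fin n → Bool)) :=
  {e | e ∈ M ∧ u ∉ e ∧ v ∉ e} ∪
    {f | ∃ a b : Fin n → Bool, s(u, a) ∈ M ∧ s(v, b) ∈ M ∧ f = s(a, b)}

/-- The complete bipartite graph `B(Q_n)` on the vertices of `Q_n`: two vertices are
adjacent iff they have opposite parity. -/
def Bgraph (n : ℕ) : SimpleGraph (Fin n → Bool) where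
  Adj u v := wt u ≠ wt v
  symm := ⟨fun _ _ h => h.symm⟩
  loopless := ⟨fun _ h => h rfl⟩

section Aux

variable {n : ℕ}

lemma flip_apply_self (u : Fin n → Bool) (i : Fin n) : flipCoord u i i = !u i := by
  simp [flipCoord]

lemma flip_apply_ne (u : Fin n → Bool) {i j : Fin n} (h : j ≠ i) : flipCoord u i j = u j := by
  simp [flipCoord, Function.update_of_ne h]

lemma flip_flip' (u : Fin n → Bool) (i : Fin n) : flipCoord (flipCoord u i) i = u := by
  funext j
  by_cases h : j = i
  · subst h; simp [flipCoord]
  · simp [flipCoord, Function.update_of_ne h]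

lemma flip_ne (u : Fin n → Bool) (i : Fin n) : flipCoord u i ≠ u := by
  intro h
  have := congrFun h i
  simp [flipCoord] at this

lemma zmod2_ne {a b : ZMod 2} (h : a ≠ b) : b = a + 1 := by revert h; revert a b; decide

lemma zmod2_ne_add_one (a : ZMod 2) : a ≠ a + 1 := by revert a; decide

lemma wt_eq_sum (u : Fin n → Bool) : wt u = ∑ i, (if u i = true then 1 else 0 : ZMod 2) := by
  unfold wt
  rw [Finset.card_filter]
  push_cast [apply_ite (Nat.cast : ℕ → ZMod 2)]
  rfl

lemma wt_flip (u : Fin n → Bool) (k : Fin n) : wt (flipCoord u k) = wt u + 1 := by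
  rw [wt_eq_sum, wt_eq_sum]
  rw [← Finset.sum_erase_add _ _ (Finset.mem_univ k),
      ← Finset.sum_erase_add _ (fun i => (if u i = true then 1 else 0 : ZMod 2)) (Finset.mem_univ k)]
  have h1 : ∑ i ∈ Finset.univ.erase k, (if flipCoord u k i = true then 1 else 0 : ZMod 2)
      = ∑ i ∈ Finset.univ.erase k, (if u i = true then 1 else 0 : ZMod 2) := by
    refine Finset.sum_congr rfl fun j hj => ?_
    rw [flip_apply_ne u (Finset.ne_of_mem_erase hj)]
  rw [h1, flip_apply_self, add_assoc]
  congr 1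
  cases h : u k <;> simp; decide

lemma adj_flip {u w : Fin n → Bool} (h : (Qc n).Adj u w) : ∃ k, w = flipCoord u k := by
  have h' : (Finset.univ.filter fun i => u i ≠ w i).card = 1 := h
  obtain ⟨k, hk⟩ := Finset.card_eq_one.mp h'
  refine ⟨k, funext fun j => ?_⟩
  by_cases hj : j = k
  · subst hj
    have hmem : j ∈ Finset.univ.filter fun i => u i ≠ w i := by
      rw [hk]; exact Finset.mem_singleton_self j
    have : u j ≠ w j := by simpa using hmem
    rw [flip_apply_self]
    cases hu : u j <;> cases hw : w j <;> simp_all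
  · have hmem : j ∉ Finset.univ.filter fun i => u i ≠ w i := by
      rw [hk]; simp [hj]
    simp only [Finset.mem_filter, Finset.mem_univ, true_and, not_not] at hmem
    rw [flip_apply_ne _ hj]
    exact hmem.symm

lemma partner_unique {M : Set (Sym2 (Fin n → Bool))} (hM : IsMatchingOn (Qc n) M)
    {u a b : Fin n → Bool} (ha : s(u,a) ∈ M) (hb : s(u,b) ∈ M) : a = b := by
  by_cases h : s(u,a) = s(u,b)
  · rcases Sym2.eq_iff.mp h with ⟨_, h2⟩ | ⟨h1, h2⟩
    · exact h2
    · rw [h2, h1]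
  · exact absurd (Sym2.mem_mk_left u b) (hM.2 _ ha _ hb h u (Sym2.mem_mk_left u a))

lemma halfLayer_edge_of_mem {i : Fin n} {p : ZMod 2} {e : Sym2 (Fin n → Bool)}
    (he : e ∈ halfLayer n i p) {u : Fin n → Bool} (hu : u ∈ e) :
    e = s(u, flipCoord u i) := by
  obtain ⟨b, hbi, hbw, rfl⟩ := he
  rcases Sym2.mem_iff.mp hu with rfl | rfl
  · rfl
  · rw [flip_flip']; exact Sym2.eq_swap

lemma halfLayer_covered {i : Fin n} {p : ZMod 2} {u : Fin n → Bool}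
    (h : coveredBy (halfLayer n i p) u) :
    (u i = false ∧ wt u = p) ∨ (u i = true ∧ wt u = p + 1) := by
  obtain ⟨e, he, hu⟩ := h
  obtain ⟨b, hbi, hbw, rfl⟩ := he
  rcases Sym2.mem_iff.mp hu with rfl | rfl
  · exact Or.inl ⟨hbi, hbw⟩
  · exact Or.inr ⟨by rw [flip_apply_self, hbi]; rfl, by rw [wt_flip, hbw]⟩

end Aux
lemma no_two_almost {d : ℕ} (hd : 5 ≤ d) {M : Set (Sym2 (Fin d → Bool))}
    (hM : IsMatchingOn (Qc d) M) {u : Fin d → Bool} {i i' : Fin d} (hii : i ≠ i')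
    {p p' : ZMod 2} {e₀ e₀' : Sym2 (Fin d → Bool)}
    (he₀ : e₀ ∈ halfLayer d i p) (hue₀ : u ∈ e₀)
    (hsub : halfLayer d i p \ {e₀} ⊆ M)
    (he₀' : e₀' ∈ halfLayer d i' p') (hue₀' : u ∈ e₀')
    (hsub' : halfLayer d i' p' \ {e₀'} ⊆ M) : False := by
  classical
  have he₀eq : e₀ = s(u, flipCoord u i) := halfLayer_edge_of_mem he₀ hue₀
  have he₀'eq : e₀' = s(u, flipCoord u i') := halfLayer_edge_of_mem he₀' hue₀'
  -- pick two distinct coordinates k ≠ l outside {i, i'}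
  have hcard : 1 < (Finset.univ \ {i, i'} : Finset (Fin d)).card := by
    have h2 : ({i, i'} : Finset (Fin d)).card ≤ 2 := Finset.card_insert_le _ _ |>.trans (by simp)
    have := Finset.card_sdiff_of_subset (Finset.subset_univ ({i, i'} : Finset (Fin d)))
    rw [this, Finset.card_univ, Fintype.card_fin]
    omega
  obtain ⟨k, hk, l, hl, hkl⟩ := Finset.one_lt_card.mp hcard
  simp only [Finset.mem_sdiff, Finset.mem_univ, true_and, Finset.mem_insert,
    Finset.mem_singleton, not_or] at hk hl
  obtain ⟨hki, hki'⟩ := hk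
  obtain ⟨hli, hli'⟩ := hl
  -- the generic contradiction for a suitable z
  have key : ∀ z : Fin d → Bool, z i = false → z i' = (if p = p' then false else true) →
      z k = !u k → wt z = p → False := by
    intro z hzi hzi' hzk hzp
    have hzu : z ≠ u := fun h => by
      have := congrFun h k; rw [hzk] at this; exact (Bool.not_ne_self (u k)) this
    have hzui : z ≠ flipCoord u i := fun h => by
      have := congrFun h k; rw [hzk, flip_apply_ne u hki] at this
      exact (Bool.not_ne_self (u k)) this
    have hzui' : z ≠ flipCoord u i' := fun h => by
      have := congrFun h k; rw [hzk, flip_apply_ne u hki'] at this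
      exact (Bool.not_ne_self (u k)) this
    -- edge e in direction i at z
    have heHL : s(z, flipCoord z i) ∈ halfLayer d i p := ⟨z, hzi, hzp, rfl⟩
    have heM : s(z, flipCoord z i) ∈ M := by
      refine hsub ⟨heHL, ?_⟩
      intro hmem
      rw [Set.mem_singleton_iff, he₀eq] at hmem
      have : z ∈ s(u, flipCoord u i) := hmem ▸ Sym2.mem_mk_left _ _
      rcases Sym2.mem_iff.mp this with h | h
      · exact hzu h
      · exact hzui h
    -- edge f in direction i' at z
    have hf : ∃ f ∈ M, z ∈ f ∧ flipCoord z i' ∈ f := by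
      by_cases hpp : p = p'
      · rw [if_pos hpp] at hzi'
        have hfHL : s(z, flipCoord z i') ∈ halfLayer d i' p' := ⟨z, hzi', hpp ▸ hzp, rfl⟩
        refine ⟨_, hsub' ⟨hfHL, ?_⟩, Sym2.mem_mk_left _ _, Sym2.mem_mk_right _ _⟩
        intro hmem
        rw [Set.mem_singleton_iff, he₀'eq] at hmem
        have : z ∈ s(u, flipCoord u i') := hmem ▸ Sym2.mem_mk_left _ _
        rcases Sym2.mem_iff.mp this with h | h
        · exact hzu h
        · exact hzui' h
      · rw [if_neg hpp] at hzi'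
        have hb : flipCoord z i' i' = false := by rw [flip_apply_self, hzi']; rfl
        have hbw : wt (flipCoord z i') = p' := by
          rw [wt_flip, hzp]; exact (zmod2_ne hpp).symm
        have hfHL : s(flipCoord z i', flipCoord (flipCoord z i') i') ∈ halfLayer d i' p' :=
          ⟨flipCoord z i', hb, hbw, rfl⟩
        rw [flip_flip'] at hfHL
        refine ⟨_, hsub' ⟨hfHL, ?_⟩, Sym2.mem_mk_right _ _, Sym2.mem_mk_left _ _⟩
        intro hmem
        rw [Set.mem_singleton_iff, he₀'eq] at hmem
        have : z ∈ s(u, flipCoord u i') := hmem ▸ Sym2.mem_mk_right _ _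
        rcases Sym2.mem_iff.mp this with h | h
        · exact hzu h
        · exact hzui' h
    obtain ⟨f, hfM, hzf, hzif⟩ := hf
    have hef : s(z, flipCoord z i) ≠ f := by
      intro h
      rw [← h] at hzif
      rcases Sym2.mem_iff.mp hzif with h2 | h2
      · exact flip_ne z i' h2
      · have := congrFun h2 i'
        rw [flip_apply_self, flip_apply_ne z (Ne.symm hii)] at this
        exact (Bool.not_ne_self (z i')) this
    exact hM.2 _ heM _ hfM hef z (Sym2.mem_mk_left _ _) hzf
  -- construct z
  set c : Bool := if p = p' then false else true with hc
  set z₀ : Fin d → Bool := fun m =>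
    if m = i then false else if m = i' then c else if m = k then !u k else u m with hz₀
  have hz₀i : z₀ i = false := by simp [hz₀]
  have hz₀i' : z₀ i' = c := by simp [hz₀, Ne.symm hii]
  have hz₀k : z₀ k = !u k := by simp [hz₀, hki, hki']
  by_cases hw : wt z₀ = p
  · exact key z₀ hz₀i hz₀i' hz₀k hw
  · refine key (flipCoord z₀ l) ?_ ?_ ?_ ?_
    · rw [flip_apply_ne z₀ (Ne.symm hli)]; exact hz₀i
    · rw [flip_apply_ne z₀ (Ne.symm hli')]; exact hz₀i'
    · rw [flip_apply_ne z₀ hkl]; exact hz₀k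
    · rw [wt_flip]; exact (zmod2_ne hw).symm
lemma ncard_le_one_of_subsingleton {α : Type*} {s : Set α} (h : s.Subsingleton) :
    s.ncard ≤ 1 := by
  rcases h.eq_empty_or_singleton with rfl | ⟨a, rfl⟩ <;> simp


/-- For `d ≥ 5`, a vertex `u` of `Q_d` and a matching `M` of `Q_d`, assuming Conjecture B
for dimension `d`, at most two neighbors of `u` admit no Hamilton path to `u`
extending `M`. -/
theorem stmt5 (d : ℕ) (hd : 5 ≤ d) (u : Fin d → Bool)
    (M : Set (Sym2 (Fin d → Bool))) (hM : IsMatchingOn (Qc d) M) (hB : ConjB d) :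
    {w | (Qc d).Adj u w ∧ ¬ ExtendsHamPath (Qc d) M u w}.ncard ≤ 2 := by
  classical
  set P2 : (Fin d → Bool) → Prop := fun w =>
    ∃ (i : Fin d) (p : ZMod 2) (e₀ : Sym2 (Fin d → Bool)), w = flipCoord u i ∧
      e₀ ∈ halfLayer d i p ∧ u ∈ e₀ ∧ halfLayer d i p \ {e₀} ⊆ M with hP2
  have hsubS : {w | (Qc d).Adj u w ∧ ¬ ExtendsHamPath (Qc d) M u w}
      ⊆ {w | s(u, w) ∈ M} ∪ {w | P2 w} := by
    rintro w ⟨hadj, hnE⟩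
    obtain ⟨k, hwk⟩ := adj_flip hadj
    have hne : wt u ≠ wt w := by
      rw [hwk, wt_flip]; exact zmod2_ne_add_one (wt u)
    have hnN : ¬ NoneC M u w := fun hN => hnE ((hB M hM u w hne).mpr hN)
    have hC : CondC1 M u w ∨ CondC2 M u w ∨ CondC3 M u w := by
      by_contra h
      push_neg at h
      exact hnN ⟨h.1, h.2.1, h.2.2⟩
    rcases hC with hC1 | hC2 | hC3
    · -- C1 forces w = u^i with s(u, u^i) ∈ M
      left
      obtain ⟨i, p, hsubM, hcu, hcw⟩ := hC1
      obtain ⟨e, he, hue⟩ := hcu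
      have heq : e = s(u, flipCoord u i) := halfLayer_edge_of_mem he hue
      have huiM : s(u, flipCoord u i) ∈ M := hsubM (heq ▸ he)
      have hwi : w = flipCoord u i := by
        by_cases hik : k = i
        · rw [hwk, hik]
        · exfalso
          have hwui : w i = u i := by rw [hwk, flip_apply_ne u (fun h => hik h.symm)]
          have hwwt : wt w = wt u + 1 := by rw [hwk, wt_flip]
          have hu := halfLayer_covered ⟨e, he, hue⟩
          have hw := halfLayer_covered hcw
          rcases hu with ⟨hu1, hu2⟩ | ⟨hu1, hu2⟩ <;> rcases hw with ⟨hw1, hw2⟩ | ⟨hw1, hw2⟩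
          · exact zmod2_ne_add_one (wt u) (by rw [← hwwt, hw2]; exact hu2)
          · rw [hwui, hu1] at hw1; exact Bool.false_ne_true hw1
          · rw [hwui, hu1] at hw1; simp at hw1
          · exact zmod2_ne_add_one (wt u) (by rw [← hwwt, hw2]; exact hu2)
      rw [hwi]; exact huiM
    · right
      obtain ⟨i, hwi, ⟨p, e₀, he₀, hue₀, hsub⟩, _⟩ := hC2
      exact ⟨i, p, e₀, hwi, he₀, hue₀, hsub⟩
    · left; exact hC3
  have h1 : {w | s(u, w) ∈ M}.Subsingleton := fun a ha b hb => partner_unique hM ha hb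
  have h2 : {w | P2 w}.Subsingleton := by
    rintro a ⟨i, p, e₀, rfl, he₀, hue₀, hsub⟩ b ⟨i', p', e₀', rfl, he₀', hue₀', hsub'⟩
    by_cases hii : i = i'
    · rw [hii]
    · exact absurd (no_two_almost hd hM hii he₀ hue₀ hsub he₀' hue₀' hsub') not_false
  have hfin : ({w | s(u, w) ∈ M} ∪ {w | P2 w}).Finite := h1.finite.union h2.finite
  calc {w | (Qc d).Adj u w ∧ ¬ ExtendsHamPath (Qc d) M u w}.ncard
      ≤ ({w | s(u, w) ∈ M} ∪ {w | P2 w}).ncard := Set.ncard_le_ncard hsubS hfin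
    _ ≤ {w | s(u, w) ∈ M}.ncard + {w | P2 w}.ncard := Set.ncard_union_le _ _
    _ ≤ 2 := by
        have := ncard_le_one_of_subsingleton h1
        have := ncard_le_one_of_subsingleton h2
        omega
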